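/- Let H be a real inner product space, G a real normed vector space, and l : G → H a continuous linear map. For v ∈ H let Λ(v) be the continuous linear functional on G defined by Λ(v)(ρ) = ⟨v, l ρ⟩, and let ‖Λ(v)‖ denote its operator norm. If C ≥ 0 is such that ‖ρ‖ ≤ C‖Λ(l ρ)‖ for all ρ ∈ G, then ‖l ρ‖ ≤ √C · ‖Λ(l ρ)‖ for all ρ ∈ G. -/
import Mathlib


open scoped RealInnerProductSpace

/-- Second inequality of Lemma 2.9: with `Λ(v)(ρ) = ⟨v, l ρ⟩`, if `‖ρ‖ ≤ C‖Λ(l ρ)‖`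
for all `ρ`, then `‖l ρ‖ ≤ √C · ‖Λ(l ρ)‖` for all `ρ`. -/
theorem lemma_2_9_second_inequality
    {H G : Type*} [NormedAddCommGroup H] [InnerProductSpace ℝ H]
    [NormedAddCommGroup G] [NormedSpace ℝ G]
    (l : G →L[ℝ] H) (Lam : H → (G →L[ℝ] ℝ))
    (hLam : ∀ (v : H) (ρ : G), Lam v ρ = ⟪v, l ρ⟫)
    (C : ℝ) (hC : 0 ≤ C)
    (hbound : ∀ ρ : G, ‖ρ‖ ≤ C * ‖Lam (l ρ)‖) :
    ∀ ρ : G, ‖l ρ‖ ≤ Real.sqrt C * ‖Lam (l ρ)‖ := by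
  intro ρ
  have hsq : ‖l ρ‖ ^ 2 ≤ C * ‖Lam (l ρ)‖ ^ 2 := by
    have h1 : ‖l ρ‖ ^ 2 = Lam (l ρ) ρ := by
      rw [hLam, real_inner_self_eq_norm_sq]
    have h2 : Lam (l ρ) ρ ≤ ‖Lam (l ρ)‖ * ‖ρ‖ :=
      le_trans (le_abs_self _) ((Lam (l ρ)).le_opNorm ρ)
    have h3 : ‖Lam (l ρ)‖ * ‖ρ‖ ≤ ‖Lam (l ρ)‖ * (C * ‖Lam (l ρ)‖) :=
      mul_le_mul_of_nonneg_left (hbound ρ) (norm_nonneg _)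
    calc ‖l ρ‖ ^ 2 = Lam (l ρ) ρ := h1
      _ ≤ ‖Lam (l ρ)‖ * ‖ρ‖ := h2
      _ ≤ ‖Lam (l ρ)‖ * (C * ‖Lam (l ρ)‖) := h3
      _ = C * ‖Lam (l ρ)‖ ^ 2 := by ring
  have := Real.sqrt_le_sqrt hsq
  rwa [Real.sqrt_sq (norm_nonneg _), Real.sqrt_mul hC,
    Real.sqrt_sq (norm_nonneg _)] at this
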